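/- Suppose R has minimal canonical conductor, i.e., B(ω) = R̄ for some canonical ideal ω of R. Then the ring B = (𝔪 :_K 𝔪) = {x ∈ K : x·𝔪 ⊆ 𝔪} also has minimal canonical conductor: for every canonical ideal ω_B of B (in the duality sense over B), the blowup algebra ⋃_{n≥0}(ω_Bⁿ :_K ω_Bⁿ) equals R̄, the integral closure of B in K. -/
import Mathlib


set_option synthInstance.maxHeartbeats 400000
set_option maxHeartbeats 1000000

open IsLocalRing TensorProduct

/-- The trace ideal of a module: the ideal generated by all values `f m`
for `f : M →ₗ[R] R` and `m : M`. -/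
def traceIdeal (R : Type*) [CommRing R] (M : Type*) [AddCommGroup M] [Module R M] :
    Ideal R :=
  ⨆ f : M →ₗ[R] R, LinearMap.range f

/-- The conductor of a Noetherian domain `R`:
`co(R) = {r ∈ R : r · R̄ ⊆ R}`, where `R̄` is the integral closure of `R` in its
fraction field. -/
noncomputable def conductorIdeal (R : Type*) [CommRing R] [IsDomain R] : Ideal R where
  carrier := {r : R | ∀ x ∈ integralClosure R (FractionRing R),
    algebraMap R (FractionRing R) r * x ∈ (algebraMap R (FractionRing R)).range}
  add_mem' := by
    intro a b ha hb x hx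
    rw [map_add, add_mul]
    exact add_mem (ha x hx) (hb x hx)
  zero_mem' := by
    intro x hx
    rw [map_zero, zero_mul]
    exact zero_mem _
  smul_mem' := by
    intro c a ha x hx
    rw [smul_eq_mul, map_mul, mul_assoc]
    exact mul_mem ⟨c, rfl⟩ (ha x hx)

/-- The image of an ideal `I` of `R` inside the fraction field, as an `R`-submodule. -/
noncomputable def idealImage (R : Type*) [CommRing R] [IsDomain R] (I : Ideal R) :
    Submodule R (FractionRing R) :=
  Submodule.map (Algebra.linearMap R (FractionRing R)) I

/-- The blowup algebra `B(I) = ⋃ₙ (Iⁿ :_K Iⁿ) = {x ∈ K : x·Iⁿ ⊆ Iⁿ for some n}`,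
as a subset of the fraction field `K`. -/
noncomputable def blowupSet (R : Type*) [CommRing R] [IsDomain R] (I : Ideal R) :
    Set (FractionRing R) :=
  {x | ∃ n : ℕ, ∀ y ∈ idealImage R (I ^ n), x * y ∈ idealImage R (I ^ n)}

/-- `b(I) = {r ∈ R : r · B(I) ⊆ R}`, the conductor of the blowup algebra. -/
noncomputable def bSet (R : Type*) [CommRing R] [IsDomain R] (I : Ideal R) : Set R :=
  {r | ∀ x ∈ blowupSet R I,
    algebraMap R (FractionRing R) r * x ∈ (algebraMap R (FractionRing R)).range}

/-- `(W :_K F) = {x ∈ K : x · F ⊆ W}`. -/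
def colonSet {K : Type*} [Mul K] (W F : Set K) : Set K := {x | ∀ y ∈ F, x * y ∈ W}

/-- A canonical ideal of a one-dimensional domain `R`: a nonzero ideal `ω` such that
`(ω :_K (ω :_K F)) = F` for every nonzero finitely generated `R`-submodule `F` of the
fraction field `K` (Herzog–Kunz duality characterization). -/
noncomputable def IsCanonicalIdeal (R : Type*) [CommRing R] [IsDomain R] (ω : Ideal R) :
    Prop :=
  ω ≠ ⊥ ∧ ∀ F : Submodule R (FractionRing R), F.FG → F ≠ ⊥ →
    colonSet (idealImage R ω : Set (FractionRing R))
      (colonSet (idealImage R ω : Set (FractionRing R)) (F : Set (FractionRing R)))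
      = (F : Set (FractionRing R))

/-- The image of an ideal `I` of a ring `A` inside an `A`-algebra `L`,
as an `A`-submodule of `L`. -/
def idealImageIn (A : Type*) (L : Type*) [CommRing A] [CommRing L] [Algebra A L]
    (I : Ideal A) : Submodule A L :=
  Submodule.map (Algebra.linearMap A L) I

/-- A canonical ideal of a one-dimensional ring `A` with total fraction field `L`,
in the Herzog–Kunz duality sense: a nonzero ideal `ω` with `(ω :_L (ω :_L F)) = F`
for every nonzero finitely generated `A`-submodule `F` of `L`. -/
def IsCanonicalIdealOver (A : Type*) (L : Type*) [CommRing A] [CommRing L] [Algebra A L]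
    (ω : Ideal A) : Prop :=
  ω ≠ ⊥ ∧ ∀ F : Submodule A L, F.FG → F ≠ ⊥ →
    colonSet (idealImageIn A L ω : Set L)
      (colonSet (idealImageIn A L ω : Set L) (F : Set L)) = (F : Set L)

/-- The blowup algebra `B(I) = ⋃ₙ (Iⁿ :_L Iⁿ)` of an ideal `I` of `A`,
as a subset of `L`. -/
def blowupSetIn (A : Type*) (L : Type*) [CommRing A] [CommRing L] [Algebra A L]
    (I : Ideal A) : Set L :=
  {x | ∃ n : ℕ, ∀ y ∈ idealImageIn A L (I ^ n), x * y ∈ idealImageIn A L (I ^ n)}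

/-- The endomorphism ring `B = (𝔪 :_K 𝔪) = {x ∈ K : x · 𝔪 ⊆ 𝔪}`, as a subalgebra of
the fraction field `K` of `R`. -/
noncomputable def endoMaximalIdeal (R : Type*) [CommRing R] [IsDomain R] [IsLocalRing R] :
    Subalgebra R (FractionRing R) where
  carrier := {x | ∀ y ∈ idealImage R (IsLocalRing.maximalIdeal R),
    x * y ∈ idealImage R (IsLocalRing.maximalIdeal R)}
  mul_mem' := by
    intro a b ha hb y hy
    rw [mul_assoc]
    exact ha _ (hb y hy)
  one_mem' := by
    intro y hy
    rw [one_mul]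
    exact hy
  add_mem' := by
    intro a b ha hb y hy
    rw [add_mul]
    exact add_mem (ha y hy) (hb y hy)
  zero_mem' := by
    intro y hy
    rw [zero_mul]
    exact zero_mem _
  algebraMap_mem' := by
    intro r y hy
    rw [← Algebra.smul_def]
    exact Submodule.smul_mem _ r hy

-- ======== auxiliary lemmas ========
set_option linter.unusedSectionVars false

section Kit

variable {R : Type*} [CommRing R] {K : Type*} [CommRing K] [Algebra R K]

/-- The colon `(W : F)` as a submodule. -/
def scolon (W : Submodule R K) (F : Set K) : Submodule R K where
  carrier := colonSet (W : Set K) F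
  add_mem' := by intro a b ha hb y hy; rw [add_mul]; exact W.add_mem (ha y hy) (hb y hy)
  zero_mem' := by intro y hy; rw [zero_mul]; exact W.zero_mem
  smul_mem' := by intro r x hx y hy; rw [smul_mul_assoc]; exact W.smul_mem r (hx y hy)

lemma mem_scolon {W : Submodule R K} {F : Set K} {x : K} :
    x ∈ scolon W F ↔ ∀ y ∈ F, x * y ∈ W := Iff.rfl

lemma coe_scolon {W : Submodule R K} {F : Set K} :
    (scolon W F : Set K) = colonSet (W : Set K) F := rfl

lemma scolon_anti {W : Submodule R K} {F G : Set K} (h : F ⊆ G) :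
    scolon W G ≤ scolon W F := fun _ hx y hy => hx y (h hy)

lemma scolon_mul {W F G : Submodule R K} :
    scolon W ((F * G : Submodule R K) : Set K) = scolon (scolon W (G : Set K)) (F : Set K) := by
  ext x
  constructor
  · intro h f hf g hg
    rw [mul_assoc]
    exact h _ (Submodule.mul_mem_mul hf hg)
  · intro h y hy
    refine Submodule.mul_induction_on hy (fun f hf g hg => ?_) (fun a b ha hb => ?_)
    · rw [← mul_assoc]; exact h f hf g hg
    · rw [mul_add]; exact W.add_mem ha hb

lemma scolon_one {W : Submodule R K} :
    scolon W ((1 : Submodule R K) : Set K) = W := by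
  ext x
  constructor
  · intro h
    simpa using h 1 (Submodule.mem_one.mpr ⟨1, map_one (algebraMap R K)⟩)
  · intro hx y hy
    obtain ⟨r, rfl⟩ := Submodule.mem_one.mp hy
    rw [mul_comm, ← Algebra.smul_def]
    exact W.smul_mem r hx

end Kit

section Frac

variable {R : Type*} [CommRing R] [IsDomain R] [IsNoetherianRing R]

local notation "K" => FractionRing R

lemma fg_of_le {N P : Submodule R K} (hP : P.FG) (h : N ≤ P) : N.FG := by
  have : IsNoetherian R P := isNoetherian_of_fg_of_noetherian P hP
  have h2 : (N.comap P.subtype).FG := IsNoetherian.noetherian _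
  have h3 : Submodule.map P.subtype (N.comap P.subtype) = N := by
    rw [Submodule.map_comap_eq, Submodule.range_subtype]
    exact inf_eq_right.mpr h
  rw [← h3]; exact h2.map _

lemma fg_of_mul_mem {W : Submodule R K} (hW : W.FG) (t : K) (ht : t ≠ 0)
    {N : Submodule R K} (hN : ∀ x ∈ N, x * t ∈ W) : N.FG := by
  apply fg_of_le (hW.map (LinearMap.mulLeft R t⁻¹))
  intro x hx
  refine ⟨x * t, hN x hx, ?_⟩
  show t⁻¹ * (x * t) = x
  rw [mul_comm x t, inv_mul_cancel_left₀ ht]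

lemma algebraMap_ne_zero {d : R} (hd : d ≠ 0) : algebraMap R K d ≠ 0 :=
  fun h => hd (IsFractionRing.injective R K (h.trans (map_zero _).symm))

lemma exists_denominator {F : Submodule R K} (hF : F.FG) :
    ∃ d : R, d ≠ 0 ∧ ∀ f ∈ F, algebraMap R K d * f ∈ (1 : Submodule R K) := by
  obtain ⟨s, rfl⟩ := hF
  obtain ⟨b, hb⟩ := IsLocalization.exist_integer_multiples_of_finset (nonZeroDivisors R)
    (s : Finset K)
  refine ⟨b, nonZeroDivisors.coe_ne_zero b, ?_⟩
  intro f hf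
  refine Submodule.span_induction ?_ ?_ ?_ ?_ hf
  · intro a ha
    obtain ⟨r, hr⟩ := hb a ha
    refine Submodule.mem_one.mpr ⟨r, ?_⟩
    rw [hr]
    exact (Algebra.smul_def (b : R) a).symm ▸ rfl
  · rw [mul_zero]; exact Submodule.zero_mem _
  · intro a c _ _ ha hc
    rw [mul_add]; exact Submodule.add_mem _ ha hc
  · intro r a _ ha
    rw [mul_smul_comm]; exact Submodule.smul_mem _ r ha

lemma scolon_ne_bot {W F : Submodule R K} (hW : W ≠ ⊥) (hF : F.FG) :
    scolon W (F : Set K) ≠ ⊥ := by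
  obtain ⟨w, hwW, hw0⟩ := (Submodule.ne_bot_iff _).mp hW
  obtain ⟨d, hd0, hd⟩ := exists_denominator hF
  rw [Submodule.ne_bot_iff _]
  refine ⟨w * algebraMap R K d, fun f hf => ?_, mul_ne_zero hw0 (algebraMap_ne_zero hd0)⟩
  obtain ⟨r, hr⟩ := Submodule.mem_one.mp (hd f hf)
  have : w * algebraMap R K d * f = r • w := by
    rw [mul_assoc, ← hr, Algebra.smul_def, mul_comm]
  rw [this]
  exact W.smul_mem r hwW

lemma mul_ne_bot {M N : Submodule R K} (hM : M ≠ ⊥) (hN : N ≠ ⊥) : M * N ≠ ⊥ := by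
  obtain ⟨m, hm, hm0⟩ := (Submodule.ne_bot_iff _).mp hM
  obtain ⟨n, hn, hn0⟩ := (Submodule.ne_bot_iff _).mp hN
  exact (Submodule.ne_bot_iff _).mpr ⟨m * n, Submodule.mul_mem_mul hm hn, mul_ne_zero hm0 hn0⟩

end Frac

lemma map_linearMap_pow {A L : Type*} [CommRing A] [CommRing L] [Algebra A L]
    (I : Ideal A) (n : ℕ) :
    Submodule.map (Algebra.linearMap A L) (I ^ n)
      = (Submodule.map (Algebra.linearMap A L) I) ^ n := by
  have h : Algebra.linearMap A L = (Algebra.ofId A L).toLinearMap := rfl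
  rw [h]
  exact Submodule.map_pow I (Algebra.ofId A L) n

lemma map_linearMap_top {A L : Type*} [CommRing A] [CommRing L] [Algebra A L] :
    Submodule.map (Algebra.linearMap A L) (⊤ : Ideal A) = (1 : Submodule A L) := by
  rw [Submodule.map_top, Submodule.one_eq_range]

lemma subalg_restrict_pow {R A : Type*} [CommRing R] [CommRing A] [Algebra R A]
    (S : Subalgebra R A) (W : Submodule S A) (n : ℕ) (hn : 0 < n) :
    Submodule.restrictScalars R (W ^ n) = (Submodule.restrictScalars R W) ^ n := by
  induction n with
  | zero => exact absurd hn (lt_irrefl _)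
  | succ k ih =>
    rcases Nat.eq_zero_or_pos k with h0 | hk
    · subst h0
      rw [zero_add, pow_one, pow_one]
    · rw [pow_succ, pow_succ, Submodule.restrictScalars_mul, ih hk]

lemma idealImageIn_pow_coe {R A : Type*} [CommRing R] [CommRing A] [Algebra R A]
    (S : Subalgebra R A) (J : Ideal S) (n : ℕ) (hn : 0 < n) :
    (idealImageIn S A (J ^ n) : Set A)
      = (((Submodule.restrictScalars R (idealImageIn S A J)) ^ n : Submodule R A) : Set A) := by
  rw [show idealImageIn (↥S) A (J ^ n) = (idealImageIn S A J) ^ n from map_linearMap_pow J n]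
  rw [← subalg_restrict_pow S _ n hn]
  rfl

/-- If `R` has minimal canonical conductor (i.e. `B(ω) = R̄` for some
canonical ideal `ω` of `R`), then the ring `B = (𝔪 :_K 𝔪)` also has minimal canonical
conductor: for every canonical ideal `ω_B` of `B`, the blowup algebra
`⋃ₙ (ω_Bⁿ :_K ω_Bⁿ)` equals `R̄`, the integral closure of `B` (equivalently of `R`)
in `K`. -/
theorem stmt5 (R : Type*) [CommRing R] [IsDomain R] [IsNoetherianRing R] [IsLocalRing R]
    (hdim : ringKrullDim R = 1)
    (hur : IsReduced (AdicCompletion (maximalIdeal R) R))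
    (hmcc : ∃ ω : Ideal R, IsCanonicalIdeal R ω ∧
      blowupSet R ω = (integralClosure R (FractionRing R) : Set (FractionRing R))) :
    ∀ ωB : Ideal ↥(endoMaximalIdeal R),
      IsCanonicalIdealOver ↥(endoMaximalIdeal R) (FractionRing R) ωB →
      blowupSetIn ↥(endoMaximalIdeal R) (FractionRing R) ωB =
        (integralClosure R (FractionRing R) : Set (FractionRing R)) := by
  classical
  intro ωB hcanB
  obtain ⟨ω, hcan, hblow⟩ := hmcc
  have hinj := IsFractionRing.injective R (FractionRing R)
  -- basic abbreviations
  set m : Ideal R := maximalIdeal R with hmdef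
  set mim : Submodule R (FractionRing R) := idealImage R m with hmimdef
  set ωim : Submodule R (FractionRing R) := idealImage R ω with hωimdef
  set Bsub : Submodule R (FractionRing R) :=
    Subalgebra.toSubmodule (endoMaximalIdeal R) with hBsubdef
  -- maximal ideal is nonzero
  have hm_ne : m ≠ ⊥ := by
    intro h
    have h1 : IsField R := (IsLocalRing.isField_iff_maximalIdeal_eq).mpr h
    have h2 := ringKrullDim_eq_zero_of_isField h1
    rw [hdim] at h2
    exact one_ne_zero h2
  -- generic facts about ideal images
  have h_image_ne : ∀ I : Ideal R, I ≠ ⊥ → idealImage R I ≠ ⊥ := by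
    intro I hI
    obtain ⟨r, hr, hr0⟩ := (Submodule.ne_bot_iff _).mp hI
    exact (Submodule.ne_bot_iff _).mpr
      ⟨algebraMap R _ r, ⟨r, hr, rfl⟩, algebraMap_ne_zero hr0⟩
  have h_image_fg : ∀ I : Ideal R, (idealImage R I).FG :=
    fun I => (IsNoetherian.noetherian I).map _
  have h_image_le_one : ∀ I : Ideal R, idealImage R I ≤ 1 := by
    rintro I x ⟨r, _, rfl⟩
    exact Submodule.mem_one.mpr ⟨r, rfl⟩
  have him_pow : ∀ k : ℕ, idealImage R (ω ^ k) = ωim ^ k := fun k => map_linearMap_pow ω k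
  -- duality
  have D : ∀ F : Submodule R (FractionRing R), F.FG → F ≠ ⊥ →
      scolon ωim ((scolon ωim (F : Set (FractionRing R))) : Set (FractionRing R)) = F := by
    intro F hfg hne
    exact SetLike.ext' (hcan.2 F hfg hne)
  have hone_fg : (1 : Submodule R (FractionRing R)).FG :=
    ⟨{1}, by rw [Finset.coe_singleton, ← Submodule.one_eq_span]⟩
  have hone_ne : (1 : Submodule R (FractionRing R)) ≠ ⊥ :=
    (Submodule.ne_bot_iff _).mpr
      ⟨1, Submodule.mem_one.mpr ⟨1, map_one (algebraMap R (FractionRing R))⟩, one_ne_zero⟩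
  have hω_ne : ωim ≠ ⊥ := h_image_ne ω hcan.1
  have hω_fg : ωim.FG := h_image_fg ω
  have hmim_ne : mim ≠ ⊥ := h_image_ne m hm_ne
  have hmim_fg : mim.FG := h_image_fg m
  have hωω : scolon ωim (ωim : Set (FractionRing R)) = 1 := by
    have h1 := D 1 hone_fg hone_ne
    rw [scolon_one] at h1
    exact h1
  -- facts about B
  have hBmem : ∀ x : FractionRing R, x ∈ Bsub ↔ (∀ y ∈ mim, x * y ∈ mim) := fun x => Iff.rfl
  have hone_le_B : (1 : Submodule R (FractionRing R)) ≤ Bsub := by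
    intro x hx
    obtain ⟨r, rfl⟩ := Submodule.mem_one.mp hx
    exact (Subalgebra.mem_toSubmodule _).mpr ((endoMaximalIdeal R).algebraMap_mem r)
  have h1B : (1 : FractionRing R) ∈ Bsub :=
    hone_le_B (Submodule.mem_one.mpr ⟨1, map_one (algebraMap R (FractionRing R))⟩)
  have hB_ne : Bsub ≠ ⊥ := (Submodule.ne_bot_iff _).mpr ⟨1, h1B, one_ne_zero⟩
  have hB_fg : Bsub.FG := by
    obtain ⟨t, htm, ht0⟩ := (Submodule.ne_bot_iff _).mp hm_ne
    have htim : algebraMap R (FractionRing R) t ∈ mim := ⟨t, htm, rfl⟩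
    exact fg_of_mul_mem hmim_fg _ (algebraMap_ne_zero ht0)
      (fun x hx => (hBmem x).mp hx _ htim)
  have hst_Bsub : ∀ b ∈ Bsub, ∀ f ∈ Bsub, b * f ∈ Bsub := by
    intro b hb f hf
    rw [Subalgebra.mem_toSubmodule] at *
    exact mul_mem hb hf
  -- the module C = (ω : B)
  set C : Submodule R (FractionRing R) := scolon ωim (Bsub : Set (FractionRing R)) with hCdef
  have hC_le : C ≤ ωim := by
    have h1 : C ≤ scolon ωim ((1 : Submodule R (FractionRing R)) : Set (FractionRing R)) :=
      scolon_anti hone_le_B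
    rwa [scolon_one] at h1
  have hC_st : ∀ b ∈ Bsub, ∀ f ∈ C, b * f ∈ C := by
    intro b hb x hx y hy
    have h1 : b * x * y = x * (b * y) := by ring
    rw [h1]
    exact hx _ (hst_Bsub b hb y hy)
  have hC_fg : C.FG :=
    fg_of_mul_mem hω_fg 1 one_ne_zero (fun x hx => hx 1 h1B)
  have hC_ne : C ≠ ⊥ := scolon_ne_bot hω_ne hB_fg
  -- KEY stabilization property
  have hC_cases : C = ωim ∨ C = mim * ωim := by
    by_cases hcase : ∀ x : FractionRing R,
        (∀ y ∈ mim, x * y ∈ (1 : Submodule R (FractionRing R))) → x ∈ Bsub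
    · right
      have hB1 : Bsub = scolon (1 : Submodule R (FractionRing R)) (mim : Set (FractionRing R)) := by
        apply le_antisymm
        · intro b hb y hy
          exact h_image_le_one m ((hBmem b).mp hb y hy)
        · intro x hx
          exact hcase x hx
      have hmulc : scolon ωim ((mim * ωim : Submodule R (FractionRing R)) : Set (FractionRing R))
          = scolon (1 : Submodule R (FractionRing R)) (mim : Set (FractionRing R)) := by
        rw [scolon_mul, hωω]
      have h2 : C = scolon ωim ((scolon ωim
          ((mim * ωim : Submodule R (FractionRing R)) : Set (FractionRing R)))
            : Set (FractionRing R)) := by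
        rw [hCdef, hB1, ← hmulc]
      rw [h2]
      exact D (mim * ωim) (hmim_fg.mul hω_fg) (mul_ne_bot hmim_ne hω_ne)
    · left
      push_neg at hcase
      obtain ⟨x, hx1, hxB⟩ := hcase
      have hXle : Submodule.map (LinearMap.mulLeft R x) mim ≤ 1 := by
        rintro _ ⟨y, hy, rfl⟩
        exact hx1 y hy
      have hItop : (Submodule.comap (Algebra.linearMap R (FractionRing R))
          (Submodule.map (LinearMap.mulLeft R x) mim) : Ideal R) = ⊤ := by
        by_contra hne
        apply hxB
        intro y hy
        obtain ⟨r, hr⟩ := Submodule.mem_one.mp (hx1 y hy)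
        have hrI : r ∈ (Submodule.comap (Algebra.linearMap R (FractionRing R))
            (Submodule.map (LinearMap.mulLeft R x) mim) : Ideal R) :=
          Submodule.mem_comap.mpr ⟨y, hy, hr.symm⟩
        have hrm : r ∈ m := IsLocalRing.le_maximalIdeal hne hrI
        rw [← hr]
        exact ⟨r, hrm, rfl⟩
      have h1X : (1 : FractionRing R) ∈ Submodule.map (LinearMap.mulLeft R x) mim := by
        have h3 : (1 : R) ∈ (Submodule.comap (Algebra.linearMap R (FractionRing R))
            (Submodule.map (LinearMap.mulLeft R x) mim) : Ideal R) := hItop ▸ trivial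
        have h4 := Submodule.mem_comap.mp h3
        rwa [show (Algebra.linearMap R (FractionRing R)) (1 : R) = 1 from
          map_one (algebraMap R (FractionRing R))] at h4
      obtain ⟨y, hy, hxy⟩ := h1X
      have hB1 : Bsub = 1 := by
        apply le_antisymm _ hone_le_B
        intro b hb
        have hby : b * y ∈ mim := (hBmem b).mp hb y hy
        have hxy' : x * y = 1 := hxy
        have h5 : b = x * (b * y) := by
          calc b = b * (x * y) := by rw [hxy', mul_one]
            _ = x * (b * y) := by ring
        rw [h5]
        exact hx1 _ hby
      rw [hCdef, hB1, scolon_one]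
  have KEY : ∀ z ∈ blowupSet R ω, ∃ n : ℕ, 0 < n ∧ ∀ c ∈ C ^ n, z * c ∈ C ^ n := by
    intro z hz
    obtain ⟨m', hm'⟩ := hz
    rw [him_pow m'] at hm'
    rcases Nat.eq_zero_or_pos m' with h0 | hpos
    · subst h0
      refine ⟨1, Nat.one_pos, ?_⟩
      have h1mem : (1 : FractionRing R) ∈ ωim ^ 0 := by
        rw [pow_zero]
        exact Submodule.mem_one.mpr ⟨1, map_one (algebraMap R (FractionRing R))⟩
      have hz1 : z ∈ (1 : Submodule R (FractionRing R)) := by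
        have h19 := hm' 1 h1mem
        rw [mul_one, pow_zero] at h19
        exact h19
      obtain ⟨r, hr⟩ := Submodule.mem_one.mp hz1
      intro c hc
      rw [pow_one] at hc ⊢
      rw [← hr, ← Algebra.smul_def]
      exact C.smul_mem r hc
    · refine ⟨m', hpos, ?_⟩
      rcases hC_cases with hC | hC
      · rw [hC]
        exact fun c hc => hm' c hc
      · rw [hC, mul_pow]
        intro c hc
        refine Submodule.mul_induction_on hc (fun a ha b hb => ?_) (fun a b ha hb => ?_)
        · have h6 : z * (a * b) = a * (z * b) := by ring
          rw [h6]
          exact Submodule.mul_mem_mul ha (hm' b hb)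
        · rw [mul_add]
          exact Submodule.add_mem _ ha hb
  -- the B-side
  set WB : Submodule ↥(endoMaximalIdeal R) (FractionRing R) :=
    idealImageIn ↥(endoMaximalIdeal R) (FractionRing R) ωB with hWBdef
  set Wr : Submodule R (FractionRing R) := Submodule.restrictScalars R WB with hWrdef
  have him_le_B : ∀ J : Ideal ↥(endoMaximalIdeal R),
      Submodule.restrictScalars R (idealImageIn ↥(endoMaximalIdeal R) (FractionRing R) J)
        ≤ Bsub := by
    rintro J y ⟨w, _, rfl⟩
    exact (Subalgebra.mem_toSubmodule _).mpr w.2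
  have hWr_ne : Wr ≠ ⊥ := by
    obtain ⟨w, hw, hw0⟩ := (Submodule.ne_bot_iff _).mp hcanB.1
    refine (Submodule.ne_bot_iff _).mpr ⟨(w : FractionRing R), ⟨w, hw, rfl⟩, ?_⟩
    exact fun h => hw0 (Subtype.ext h)
  have hWr_le_B : Wr ≤ Bsub := him_le_B ωB
  have hWr_fg : Wr.FG := fg_of_mul_mem hB_fg 1 one_ne_zero
    (fun x hx => by rw [mul_one]; exact hWr_le_B hx)
  have hWr_st : ∀ b ∈ Bsub, ∀ f ∈ Wr, b * f ∈ Wr := by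
    intro b hb f hf
    obtain ⟨w, hw, rfl⟩ := hf
    exact ⟨⟨b, (Subalgebra.mem_toSubmodule _).mp hb⟩ * w, Ideal.mul_mem_left _ _ hw, rfl⟩
  -- transfer of the canonical duality of ωB
  have TB : ∀ F : Submodule R (FractionRing R), (∀ b ∈ Bsub, ∀ f ∈ F, b * f ∈ F) →
      F.FG → F ≠ ⊥ →
      scolon Wr ((scolon Wr (F : Set (FractionRing R))) : Set (FractionRing R)) = F := by
    intro F hst hfg hne
    let F' : Submodule ↥(endoMaximalIdeal R) (FractionRing R) :=
      { carrier := F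
        add_mem' := fun ha hb => F.add_mem ha hb
        zero_mem' := F.zero_mem
        smul_mem' := fun b f hf => by
          have h7 : b • f = (b : FractionRing R) * f := Algebra.smul_def b f
          rw [h7]
          exact hst (b : FractionRing R) ((Subalgebra.mem_toSubmodule _).mpr b.2) f hf }
    have hF'fg : F'.FG := by
      obtain ⟨s, hs⟩ := hfg
      refine ⟨s, le_antisymm ?_ ?_⟩
      · rw [Submodule.span_le]
        intro a ha
        show a ∈ F
        rw [← hs]
        exact Submodule.subset_span ha
      · intro x hx
        have hx' : x ∈ F := hx
        rw [← hs] at hx'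
        exact Submodule.span_le_restrictScalars R _ _ hx'
    have hF'ne : F' ≠ ⊥ := by
      obtain ⟨f0, hf0, h0⟩ := (Submodule.ne_bot_iff _).mp hne
      exact (Submodule.ne_bot_iff _).mpr ⟨f0, hf0, h0⟩
    exact SetLike.ext' (hcanB.2 F' hF'fg hF'ne)
  -- C is a canonical module over B
  have hscolC : ∀ F : Submodule R (FractionRing R), (∀ b ∈ Bsub, ∀ f ∈ F, b * f ∈ F) →
      scolon C (F : Set (FractionRing R)) = scolon ωim (F : Set (FractionRing R)) := by
    intro F hst
    apply le_antisymm
    · intro x hx f hf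
      exact hC_le (hx f hf)
    · intro x hx f hf b hb
      have h9 : x * f * b = x * (b * f) := by ring
      rw [h9]
      exact hx _ (hst b hb f hf)
  have hst_scolon_ω : ∀ F : Submodule R (FractionRing R),
      (∀ b ∈ Bsub, ∀ f ∈ F, b * f ∈ F) →
      (∀ b ∈ Bsub, ∀ g ∈ scolon ωim (F : Set (FractionRing R)),
        b * g ∈ scolon ωim (F : Set (FractionRing R))) := by
    intro F hst b hb g hg f hf
    have h10 : b * g * f = g * (b * f) := by ring
    rw [h10]
    exact hg _ (hst b hb f hf)
  have TC : ∀ F : Submodule R (FractionRing R), (∀ b ∈ Bsub, ∀ f ∈ F, b * f ∈ F) →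
      F.FG → F ≠ ⊥ →
      scolon C ((scolon C (F : Set (FractionRing R))) : Set (FractionRing R)) = F := by
    intro F hst hfg hne
    rw [hscolC F hst, hscolC _ (hst_scolon_ω F hst)]
    exact D F hfg hne
  -- (C : C) = B
  have hCB : scolon C (Bsub : Set (FractionRing R)) = C := by
    apply le_antisymm
    · intro x hx
      have := hx 1 h1B
      rwa [mul_one] at this
    · intro x hx b hb
      rw [mul_comm]
      exact hC_st b hb x hx
  have hCC : scolon C (C : Set (FractionRing R)) = Bsub := by
    have h11 := TC Bsub hst_Bsub hB_fg hB_ne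
    rw [hCB] at h11
    exact h11
  -- the invertible module Q with W = C * Q
  set P : Submodule R (FractionRing R) := scolon C (Wr : Set (FractionRing R)) with hPdef
  set Q : Submodule R (FractionRing R) := scolon Wr (C : Set (FractionRing R)) with hQdef
  have hP_st : ∀ b ∈ Bsub, ∀ f ∈ P, b * f ∈ P := by
    intro b hb p hp w hw
    have h12 : b * p * w = b * (p * w) := by ring
    rw [h12]
    exact hC_st b hb _ (hp w hw)
  have hP_fg : P.FG := by
    obtain ⟨w0, hw0, hw00⟩ := (Submodule.ne_bot_iff _).mp hWr_ne
    exact fg_of_mul_mem hC_fg w0 hw00 (fun x hx => hx w0 hw0)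
  have hQ_fg : Q.FG := by
    obtain ⟨c0, hc0, hc00⟩ := (Submodule.ne_bot_iff _).mp hC_ne
    exact fg_of_mul_mem hWr_fg c0 hc00 (fun x hx => hx c0 hc0)
  have hP_ne : P ≠ ⊥ := scolon_ne_bot hC_ne hWr_fg
  have hQ_ne : Q ≠ ⊥ := scolon_ne_bot hWr_ne hC_fg
  have hCP : scolon C (P : Set (FractionRing R)) = Wr := by
    rw [hPdef]
    exact TC Wr hWr_st hWr_fg hWr_ne
  have hWQ : scolon Wr (Q : Set (FractionRing R)) = C := by
    rw [hQdef]
    exact TB C hC_st hC_fg hC_ne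
  have hcolPQ : scolon C ((P * Q : Submodule R (FractionRing R)) : Set (FractionRing R))
      = C := by
    rw [mul_comm, scolon_mul, hCP]
    exact hWQ
  have hst_PQ : ∀ b ∈ Bsub, ∀ f ∈ (P * Q : Submodule R (FractionRing R)),
      b * f ∈ (P * Q : Submodule R (FractionRing R)) := by
    intro b hb f hf
    refine Submodule.mul_induction_on hf (fun p hp q hq => ?_) (fun a c ha hc => ?_)
    · have h13 : b * (p * q) = (b * p) * q := by ring
      rw [h13]
      exact Submodule.mul_mem_mul (hP_st b hb p hp) hq
    · rw [mul_add]
      exact Submodule.add_mem _ ha hc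
  have hPQ : P * Q = Bsub := by
    have h14 := TC (P * Q) hst_PQ (hP_fg.mul hQ_fg) (mul_ne_bot hP_ne hQ_ne)
    rw [hcolPQ, hCC] at h14
    exact h14.symm
  have hW_eq : Wr = C * Q := by
    apply le_antisymm
    · have hWB1 : Wr = Wr * Bsub := by
        apply le_antisymm
        · intro w hw
          have h15 := Submodule.mul_mem_mul hw h1B
          rwa [mul_one] at h15
        · apply Submodule.mul_le.mpr
          intro w hw b hb
          rw [mul_comm]
          exact hWr_st b hb w hw
      rw [hWB1, ← hPQ, ← mul_assoc]
      refine le_trans (mul_le_mul' ?_ le_rfl) le_rfl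
      apply Submodule.mul_le.mpr
      intro w hw p hp
      rw [mul_comm]
      exact hp w hw
    · apply Submodule.mul_le.mpr
      intro c hc q hq
      rw [mul_comm]
      exact hq c hc
  -- powers
  have hpow_coe : ∀ n : ℕ, 0 < n →
      (idealImageIn ↥(endoMaximalIdeal R) (FractionRing R) (ωB ^ n) : Set (FractionRing R))
        = ((Wr ^ n : Submodule R (FractionRing R)) : Set (FractionRing R)) :=
    fun n hn => idealImageIn_pow_coe (endoMaximalIdeal R) ωB n hn
  -- conclusion
  apply Set.eq_of_subset_of_subset
  · rintro x ⟨n, hn⟩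
    set N : Submodule R (FractionRing R) := Submodule.restrictScalars R
      (idealImageIn ↥(endoMaximalIdeal R) (FractionRing R) (ωB ^ n)) with hNdef
    have hNx : ∀ y ∈ N, x * y ∈ N := hn
    have hN_le : N ≤ Bsub := him_le_B (ωB ^ n)
    have hN_fg : N.FG := fg_of_mul_mem hB_fg 1 one_ne_zero
      (fun y hy => by rw [mul_one]; exact hN_le hy)
    have hN_ne : N ≠ ⊥ := by
      obtain ⟨w, hw, hw0⟩ := (Submodule.ne_bot_iff _).mp hcanB.1
      refine (Submodule.ne_bot_iff _).mpr
        ⟨((w ^ n : ↥(endoMaximalIdeal R)) : FractionRing R),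
          ⟨w ^ n, Ideal.pow_mem_pow hw n, rfl⟩, ?_⟩
      rw [SubmonoidClass.coe_pow]
      exact pow_ne_zero n (fun h => hw0 (Subtype.ext h))
    have hint : IsIntegral R x := isIntegral_of_smul_mem_submodule N hN_ne hN_fg x
      (by intro nn hnn; rw [smul_eq_mul]; exact hNx nn hnn)
    exact hint
  · intro z hz
    have hz' : z ∈ blowupSet R ω := by rw [hblow]; exact hz
    obtain ⟨n, hn_pos, hstab⟩ := KEY z hz'
    refine ⟨n, ?_⟩
    intro y hy
    have hy' : y ∈ (C ^ n * Q ^ n : Submodule R (FractionRing R)) := by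
      have h16 : y ∈ ((Wr ^ n : Submodule R (FractionRing R)) : Set (FractionRing R)) := by
        rw [← hpow_coe n hn_pos]
        exact hy
      rw [hW_eq, mul_pow] at h16
      exact h16
    have h17 : z * y ∈ (C ^ n * Q ^ n : Submodule R (FractionRing R)) := by
      refine Submodule.mul_induction_on hy' (fun c hc q hq => ?_) (fun a b ha hb => ?_)
      · have h18 : z * (c * q) = (z * c) * q := by ring
        rw [h18]
        exact Submodule.mul_mem_mul (hstab c hc) hq
      · rw [mul_add]
        exact Submodule.add_mem _ ha hb
    have h19 : z * y ∈ ((Wr ^ n : Submodule R (FractionRing R)) : Set (FractionRing R)) := by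
      rw [hW_eq, mul_pow]
      exact h17
    have h20 : z * y ∈ (idealImageIn ↥(endoMaximalIdeal R) (FractionRing R) (ωB ^ n)
        : Set (FractionRing R)) := by
      rw [hpow_coe n hn_pos]
      exact h19
    exact h20
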